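/- Let N = 2n+1, J = (1/N)L_N, H = (1/N²)(N(M_N−1_N)+1_N), r > 0, C ∈ ℝ. Suppose x : [0,t_f] → ℝ^N and γ : [0,t_f] → ℝ satisfy ẋ = Jx + γHx, rγ̇ = xᵀHx, and ||x(t)||² = rγ(t)² + C for all t. Then γ satisfies the scalar second-order ODE r·γ̈ + r·γ·γ̇ + (n/N²)·γ·(rγ² + C) = 0. -/

import Mathlib

/-- The skew-symmetric circulant payoff matrix of the complete odd circulant game:
first row `(0, -1, 1, -1, 1, …, -1, 1)`, each row a cyclic shift of the previous. -/
noncomputable def Lmat (N : ℕ) : Matrix (Fin N) (Fin N) ℝ :=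
  Matrix.of fun i j => if i = j then 0 else (-1 : ℝ) ^ ((j.val + N - i.val) % N)

/-- The 0-1 circulant tournament matrix: first row has ones exactly at positions
`3, 5, …, N` (1-indexed), i.e. at even nonzero cyclic offsets. -/
noncomputable def Mmat (N : ℕ) : Matrix (Fin N) (Fin N) ℝ :=
  Matrix.of fun i j =>
    if i ≠ j ∧ Even ((j.val + N - i.val) % N) then (1 : ℝ) else 0

/-- The `N × N` all-ones matrix. -/
noncomputable def onesMat (N : ℕ) : Matrix (Fin N) (Fin N) ℝ := Matrix.of fun _ _ => (1 : ℝ)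

/-- `H = (1/N²)(N(M_N − 1_N) + 1_N)`, the Jacobian of the controlled part of the
replicator dynamics at the interior equilibrium. -/
noncomputable def Hmat (N : ℕ) : Matrix (Fin N) (Fin N) ℝ :=
  ((1 : ℝ) / (N : ℝ) ^ 2) • ((N : ℝ) • (Mmat N - onesMat N) + onesMat N)

open Matrix

-- offset formula
lemma offset_eq {N : ℕ} (i j : Fin N) :
    (j.val + N - i.val) % N = if i.val ≤ j.val then j.val - i.val else j.val + N - i.val := by
  have hi := i.isLt; have hj := j.isLt
  split
  · next h =>
    have : j.val + N - i.val = (j.val - i.val) + N := by omega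
    rw [this, Nat.add_mod_right, Nat.mod_eq_of_lt (by omega)]
  · next h => exact Nat.mod_eq_of_lt (by omega)

lemma offset_zero_iff {N : ℕ} (i j : Fin N) : (j.val + N - i.val) % N = 0 ↔ i = j := by
  rw [offset_eq]
  have hi := i.isLt; have hj := j.isLt
  constructor
  · intro h; apply Fin.ext; split at h <;> omega
  · intro h; subst h; simp

lemma Mt (n : ℕ) : (Mmat (2*n+1))ᵀ = onesMat (2*n+1) - 1 - Mmat (2*n+1) := by
  ext i j
  simp only [Matrix.transpose_apply, Mmat, onesMat, Matrix.sub_apply, Matrix.one_apply,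
    Matrix.of_apply]
  by_cases h : i = j
  · subst h; simp
  · have h' : j ≠ i := fun e => h e.symm
    rw [offset_eq, offset_eq]
    have hi := i.isLt; have hj := j.isLt
    have hij : i.val ≠ j.val := fun e => h (Fin.ext e)
    simp only [h, h', if_neg h, Ne, not_false_iff, true_and]
    rcases Nat.lt_or_ge i.val j.val with hc | hc
    · simp only [if_pos (Nat.le_of_lt hc), if_neg (show ¬ j.val ≤ i.val by omega)]
      by_cases he : Even (j.val - i.val)
      · have h2 : ¬ Even (i.val + (2*n+1) - j.val) := by
          rw [Nat.even_iff] at he ⊢; omega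
        simp [he, h2]
      · have h2 : Even (i.val + (2*n+1) - j.val) := by
          rw [Nat.even_iff] at he ⊢; omega
        simp [he, h2]
    · have hc' : j.val < i.val := by omega
      simp only [if_pos (Nat.le_of_lt hc'), if_neg (show ¬ i.val ≤ j.val by omega)]
      by_cases he : Even (i.val - j.val)
      · have h2 : ¬ Even (j.val + (2*n+1) - i.val) := by
          rw [Nat.even_iff] at he ⊢; omega
        simp [he, h2]
      · have h2 : Even (j.val + (2*n+1) - i.val) := by
          rw [Nat.even_iff] at he ⊢; omega
        simp [he, h2]

lemma Lexp (n : ℕ) : Lmat (2*n+1) = (2:ℝ) • Mmat (2*n+1) - onesMat (2*n+1) + 1 := by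
  ext i j
  simp only [Lmat, Mmat, onesMat, Matrix.add_apply, Matrix.sub_apply, Matrix.smul_apply,
    Matrix.one_apply, Matrix.of_apply, smul_eq_mul]
  by_cases h : i = j
  · subst h; simp
  · simp only [if_neg h, h, Ne, not_false_iff, true_and]
    by_cases he : Even ((j.val + (2*n+1) - i.val) % (2*n+1))
    · rw [if_pos he, he.neg_one_pow]; norm_num
    · rw [if_neg he, (Nat.not_even_iff_odd.mp he).neg_one_pow]; norm_num

lemma count_lemma (n : ℕ) :
    (∑ d ∈ Finset.range (2*n+1), (if d ≠ 0 ∧ Even d then (1:ℝ) else 0)) = n := by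
  induction n with
  | zero => rw [Finset.sum_range_one]; simp
  | succ m ih =>
    have : 2*(m+1)+1 = (2*m+1) + 1 + 1 := by ring
    rw [this, Finset.sum_range_succ, Finset.sum_range_succ, ih]
    have h1 : ¬ ((2*m+1 : ℕ) ≠ 0 ∧ Even (2*m+1)) := by
      rintro ⟨-, h⟩; rw [Nat.even_iff] at h; omega
    have h2 : ((2*m+1+1 : ℕ) ≠ 0 ∧ Even (2*m+1+1)) := by
      constructor
      · omega
      · rw [Nat.even_iff]; omega
    rw [if_neg h1, if_pos h2]
    push_cast; ring

lemma offset_inj {N : ℕ} (hN : 0 < N) (i : Fin N) : Function.Injective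
    (fun j : Fin N => (⟨(j.val + N - i.val) % N, Nat.mod_lt _ hN⟩ : Fin N)) := by
  intro a b hab
  have h := congrArg Fin.val hab
  simp only [offset_eq] at h
  have hi := i.isLt; have ha := a.isLt; have hb := b.isLt
  apply Fin.ext
  split at h <;> split at h <;> omega

lemma row_sum (n : ℕ) (i : Fin (2*n+1)) : ∑ j, Mmat (2*n+1) i j = (n : ℝ) := by
  have hN : 0 < 2*n+1 := by omega
  have hbij := (Finite.injective_iff_bijective.mp (offset_inj hN i))
  calc ∑ j, Mmat (2*n+1) i j
      = ∑ d : Fin (2*n+1), (if d.val ≠ 0 ∧ Even d.val then (1:ℝ) else 0) := by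
        apply Fintype.sum_bijective _ hbij
        intro j
        simp only [Mmat, Matrix.of_apply]
        congr 1
        have h0 : ((j.val + (2*n+1) - i.val) % (2*n+1) = 0) ↔ i = j := offset_zero_iff i j
        by_cases h : i = j
        · simp [h, h0.mpr h]
        · have : (j.val + (2*n+1) - i.val) % (2*n+1) ≠ 0 := fun e => h (h0.mp e)
          simp [h, this]
    _ = ∑ d ∈ Finset.range (2*n+1), (if d ≠ 0 ∧ Even d then (1:ℝ) else 0) :=
        Fin.sum_univ_eq_sum_range (fun d => if d ≠ 0 ∧ Even d then (1:ℝ) else 0) (2*n+1)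
    _ = (n : ℝ) := count_lemma n

lemma MO (n : ℕ) : Mmat (2*n+1) * onesMat (2*n+1) = (n:ℝ) • onesMat (2*n+1) := by
  ext i j
  simp only [Matrix.mul_apply, onesMat, Matrix.smul_apply, Matrix.of_apply, mul_one,
    smul_eq_mul]
  rw [row_sum n i]

lemma OO (n : ℕ) : onesMat (2*n+1) * onesMat (2*n+1) = ((2*n+1:ℝ)) • onesMat (2*n+1) := by
  ext i j
  simp only [Matrix.mul_apply, onesMat, Matrix.smul_apply, Matrix.of_apply, mul_one,
    smul_eq_mul, Finset.sum_const, Finset.card_univ, Fintype.card_fin, nsmul_eq_mul]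
  push_cast; ring

lemma Ot (n : ℕ) : (onesMat (2*n+1))ᵀ = onesMat (2*n+1) := by
  ext i j; simp [onesMat]

lemma MtO (n : ℕ) : (Mmat (2*n+1))ᵀ * onesMat (2*n+1) = (n:ℝ) • onesMat (2*n+1) := by
  rw [Mt, Matrix.sub_mul, Matrix.sub_mul, OO, Matrix.one_mul]
  rw [MO]
  ext i j
  simp only [Matrix.sub_apply, Matrix.smul_apply, onesMat, Matrix.of_apply, smul_eq_mul]
  push_cast; ring

lemma OM (n : ℕ) : onesMat (2*n+1) * Mmat (2*n+1) = (n:ℝ) • onesMat (2*n+1) := by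
  have h := congrArg Matrix.transpose (MtO n)
  rw [Matrix.transpose_mul, Matrix.transpose_transpose, Matrix.transpose_smul, Ot] at h
  rw [h]

lemma OMt (n : ℕ) : onesMat (2*n+1) * (Mmat (2*n+1))ᵀ = (n:ℝ) • onesMat (2*n+1) := by
  have h := congrArg Matrix.transpose (MO n)
  rw [Matrix.transpose_mul, Matrix.transpose_smul, Ot] at h
  rw [h]

lemma Hexp (n : ℕ) : Hmat (2*n+1) =
    ((1:ℝ)/(2*n+1:ℝ)) • Mmat (2*n+1)
      - ((2*n:ℝ)/(2*n+1:ℝ)^2) • onesMat (2*n+1) := by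
  have hN : (2*(n:ℝ)+1) ≠ 0 := by positivity
  rw [Hmat]
  push_cast
  match_scalars <;> (field_simp; try ring) <;> tauto

lemma LH (n : ℕ) : Lmat (2*n+1) * Hmat (2*n+1) = Hmat (2*n+1) * Lmat (2*n+1) := by
  rw [Lexp n, Hexp n]
  simp only [Matrix.sub_mul, Matrix.mul_sub, Matrix.add_mul, Matrix.mul_add,
    smul_mul_assoc, mul_smul_comm, Matrix.one_mul, Matrix.mul_one, smul_smul,
    MO, OM, OO, smul_sub, smul_add]
  module

set_option maxHeartbeats 2000000 in
lemma key (n : ℕ) :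
    (Hmat (2*n+1))ᵀ * Hmat (2*n+1) + Hmat (2*n+1) * Hmat (2*n+1) + Hmat (2*n+1)
      + ((Hmat (2*n+1))ᵀ * Hmat (2*n+1) + Hmat (2*n+1) * Hmat (2*n+1) + Hmat (2*n+1))ᵀ
      = (-(2*(n:ℝ))/(2*(n:ℝ)+1)^2) • 1 := by
  have hN : (2*(n:ℝ)+1) ≠ 0 := by positivity
  rw [Hexp n]
  simp only [Matrix.transpose_add, Matrix.transpose_mul, Matrix.transpose_smul,
    Matrix.transpose_sub, Matrix.transpose_transpose, Matrix.transpose_one, Ot, Mt n]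
  simp only [Matrix.sub_mul, Matrix.mul_sub, Matrix.add_mul, Matrix.mul_add,
    smul_mul_assoc, mul_smul_comm, Matrix.one_mul, Matrix.mul_one, smul_smul,
    MO, OM, OO, smul_sub, smul_add]
  push_cast
  match_scalars <;> (field_simp; try ring) <;> tauto

lemma Lskew (n : ℕ) : (Lmat (2*n+1))ᵀ = - Lmat (2*n+1) := by
  rw [Lexp n]
  simp only [Matrix.transpose_add, Matrix.transpose_sub, Matrix.transpose_smul,
    Matrix.transpose_one, Ot, Mt n]
  module

lemma Qt {N : ℕ} (A : Matrix (Fin N) (Fin N) ℝ) (x : Fin N → ℝ) :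
    x ⬝ᵥ Aᵀ.mulVec x = x ⬝ᵥ A.mulVec x := by
  rw [Matrix.dotProduct_mulVec, Matrix.vecMul_transpose, dotProduct_comm]

lemma Qmul {N : ℕ} (A B : Matrix (Fin N) (Fin N) ℝ) (x : Fin N → ℝ) :
    (A.mulVec x) ⬝ᵥ (B.mulVec x) = x ⬝ᵥ ((Aᵀ * B).mulVec x) := by
  symm
  rw [← Matrix.mulVec_mulVec, Matrix.dotProduct_mulVec x, Matrix.vecMul_transpose]


/-- For the quasi-linearized control of the complete odd circulant game
(`J = (1/N)L_N`, `H` as above), if `ẋ = Jx + γHx`, `rγ̇ = xᵀHx` and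
`‖x(t)‖² = rγ(t)² + C` for all `t`, then the open-loop optimal control satisfies
`rγ̈ + rγγ̇ + (n/N²)γ(rγ² + C) = 0`. -/
theorem stmt_18 (n : ℕ) (hn : 1 ≤ n) (r C : ℝ) (hr : 0 < r)
    (x : ℝ → Fin (2 * n + 1) → ℝ) (γ γ' : ℝ → ℝ)
    (hx : ∀ t, HasDerivAt x
      ((((1 : ℝ) / (2 * n + 1 : ℝ)) • Lmat (2 * n + 1)).mulVec (x t)
        + γ t • (Hmat (2 * n + 1)).mulVec (x t)) t)
    (hγ : ∀ t, HasDerivAt γ (γ' t) t)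
    (hγ' : ∀ t, r * γ' t = dotProduct (x t) ((Hmat (2 * n + 1)).mulVec (x t)))
    (hconserve : ∀ t, ∑ i, x t i ^ 2 = r * γ t ^ 2 + C) :
    ∀ t, HasDerivAt γ'
      ((-(r * γ t * γ' t)
        - ((n : ℝ) / (2 * n + 1 : ℝ) ^ 2) * γ t * (r * γ t ^ 2 + C)) / r) t := by
  intro t
  set H := Hmat (2*n+1) with hH
  set J := ((1 : ℝ) / (2 * n + 1 : ℝ)) • Lmat (2 * n + 1) with hJ
  set v : Fin (2*n+1) → ℝ := J.mulVec (x t) + γ t • H.mulVec (x t) with hv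
  have hxi : ∀ i, HasDerivAt (fun s => x s i) (v i) t := fun i =>
    hasDerivAt_pi.mp (hx t) i
  -- derivative of the quadratic form
  have hFrep : (fun s => x s ⬝ᵥ H.mulVec (x s))
      = fun s => ∑ i, x s i * ∑ j, H i j * x s j := by
    funext s
    simp [dotProduct, Matrix.mulVec]
  have hF : HasDerivAt (fun s => x s ⬝ᵥ H.mulVec (x s))
      (v ⬝ᵥ H.mulVec (x t) + x t ⬝ᵥ H.mulVec v) t := by
    rw [hFrep]
    have h1 : HasDerivAt (fun s => ∑ i, x s i * ∑ j, H i j * x s j)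
        (∑ i, (v i * ∑ j, H i j * x t j + x t i * ∑ j, H i j * v j)) t := by
      apply HasDerivAt.fun_sum
      intro i _
      exact (hxi i).mul (HasDerivAt.fun_sum fun j _ => (hxi j).const_mul (H i j))
    convert h1 using 1
    simp [dotProduct, Matrix.mulVec, Finset.sum_add_distrib]
  -- identify the derivative value
  have hJHHJ : Jᵀ * H + H * J = 0 := by
    rw [hJ, Matrix.transpose_smul, Lskew n, Matrix.smul_mul, Matrix.mul_smul,
      Matrix.neg_mul, smul_neg, LH n]
    abel
  have hQzero : (J.mulVec (x t)) ⬝ᵥ (H.mulVec (x t)) + x t ⬝ᵥ H.mulVec (J.mulVec (x t)) = 0 := by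
    rw [Qmul, Matrix.mulVec_mulVec, ← dotProduct_add, ← Matrix.add_mulVec, hJHHJ]
    simp
  have hQH : x t ⬝ᵥ H.mulVec (x t) = r * γ' t := (hγ' t).symm
  have hQHH : (H.mulVec (x t)) ⬝ᵥ (H.mulVec (x t)) + x t ⬝ᵥ H.mulVec (H.mulVec (x t))
      = -((n:ℝ) / (2*(n:ℝ)+1)^2) * (r * γ t ^ 2 + C) - r * γ' t := by
    have hkey := key n
    have e1 : (H.mulVec (x t)) ⬝ᵥ (H.mulVec (x t)) = x t ⬝ᵥ ((Hᵀ * H).mulVec (x t)) :=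
      Qmul H H (x t)
    have e2 : x t ⬝ᵥ H.mulVec (H.mulVec (x t)) = x t ⬝ᵥ ((H * H).mulVec (x t)) := by
      rw [Matrix.mulVec_mulVec]
    have e3 : x t ⬝ᵥ ((Hᵀ * H + H * H + H
        + (Hᵀ * H + H * H + H)ᵀ).mulVec (x t))
        = (-(2*(n:ℝ))/(2*(n:ℝ)+1)^2) * (x t ⬝ᵥ x t) := by
      rw [hkey]
      rw [Matrix.smul_mulVec, dotProduct_smul, Matrix.one_mulVec]
      simp [smul_eq_mul]
    have e4 : x t ⬝ᵥ ((Hᵀ * H + H * H + H)ᵀ).mulVec (x t)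
        = x t ⬝ᵥ (Hᵀ * H + H * H + H).mulVec (x t) := Qt _ _
    have e5 : x t ⬝ᵥ x t = r * γ t ^ 2 + C := by
      rw [← hconserve t]
      simp [dotProduct, pow_two]
    have e6 : x t ⬝ᵥ ((Hᵀ * H).mulVec (x t)) + x t ⬝ᵥ ((H * H).mulVec (x t))
        = -((n:ℝ) / (2*(n:ℝ)+1)^2) * (r * γ t ^ 2 + C) - r * γ' t := by
      have expand : x t ⬝ᵥ ((Hᵀ * H + H * H + H
          + (Hᵀ * H + H * H + H)ᵀ).mulVec (x t))
          = 2 * (x t ⬝ᵥ ((Hᵀ * H).mulVec (x t)) + x t ⬝ᵥ ((H * H).mulVec (x t)))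
            + 2 * (x t ⬝ᵥ H.mulVec (x t)) := by
        simp only [Matrix.add_mulVec, dotProduct_add]
        rw [e4]
        simp only [Matrix.add_mulVec, dotProduct_add]
        ring
      rw [e3, e5, hQH] at expand
      rw [show (-(2 * (n:ℝ)) / (2 * (n:ℝ) + 1) ^ 2)
          = 2 * (-((n:ℝ) / (2 * (n:ℝ) + 1) ^ 2)) from by ring] at expand
      linarith
    rw [e1, e2, e6]
  -- express γ' as the quadratic form over r
  have hfun : γ' = fun s => (x s ⬝ᵥ H.mulVec (x s)) / r := by
    funext s
    rw [eq_div_iff hr.ne', mul_comm]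
    exact hγ' s
  have hval : (v ⬝ᵥ H.mulVec (x t) + x t ⬝ᵥ H.mulVec v)
      = -(r * γ t * γ' t) - ((n : ℝ) / (2 * n + 1 : ℝ) ^ 2) * γ t * (r * γ t ^ 2 + C) := by
    rw [hv]
    simp only [add_dotProduct, dotProduct_add, Matrix.mulVec_add,
      Matrix.mulVec_smul, smul_dotProduct, dotProduct_smul, smul_eq_mul]
    have : J.mulVec (x t) ⬝ᵥ H.mulVec (x t) + (γ t * ((H.mulVec (x t)) ⬝ᵥ (H.mulVec (x t))))
        + (x t ⬝ᵥ H.mulVec (J.mulVec (x t)) + γ t * (x t ⬝ᵥ H.mulVec (H.mulVec (x t))))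
        = (J.mulVec (x t) ⬝ᵥ H.mulVec (x t) + x t ⬝ᵥ H.mulVec (J.mulVec (x t)))
          + γ t * ((H.mulVec (x t)) ⬝ᵥ (H.mulVec (x t)) + x t ⬝ᵥ H.mulVec (H.mulVec (x t))) := by
      ring
    rw [this, hQzero, hQHH]
    push_cast
    ring
  have h2 := hF.div_const r
  rw [hval] at h2
  rwa [← hfun] at h2
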